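/- Let n ≥ 1, L > 0, μ ≤ 0, and let f : ℝⁿ → ℝ belong to F_{μ,L}. Let x⋆ be the unique global minimizer of f, with f⋆ = f(x⋆), let x¹ ∈ ℝⁿ, and suppose the sublevel set X = {x : f(x) ≤ f(x¹)} is star convex at x⋆. If f is (γ, μ_s)-quasar-convex on X with respect to x⋆, for some γ ∈ (0, 1] and μ_s ≥ 0, then for every x ∈ X one has ⟨∇f(x), x − x⋆⟩ ≥ (μ_s γ/2 + μ_s γ²/4) ‖x − x⋆‖²; that is, f has quadratic gradient growth with constant μ_g = μ_s γ/2 + μ_s γ²/4 on X. -/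

import Mathlib

open Set
open scoped RealInnerProductSpace

theorem stmt_15 (n : ℕ) (hn : 1 ≤ n)
    (f : EuclideanSpace ℝ (Fin n) → ℝ)
    (f' : EuclideanSpace ℝ (Fin n) → EuclideanSpace ℝ (Fin n))
    (L μ : ℝ) (hL : 0 < L) (hμ : μ ≤ 0)
    (hgrad : ∀ x, HasGradientAt f (f' x) x)
    (hupper : ConvexOn ℝ univ (fun x => L / 2 * ‖x‖ ^ 2 - f x))
    (hlower : ConvexOn ℝ univ (fun x => f x - μ / 2 * ‖x‖ ^ 2))
    (xstar : EuclideanSpace ℝ (Fin n)) (hmin : ∀ z, f xstar ≤ f z)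
    (huniq : ∀ y, (∀ z, f y ≤ f z) → y = xstar)
    (x1 : EuclideanSpace ℝ (Fin n))
    (hstarconv : ∀ x, f x ≤ f x1 → ∀ lam ∈ Icc (0 : ℝ) 1,
      f (lam • x + (1 - lam) • xstar) ≤ f x1)
    (γ μs : ℝ) (hγ : γ ∈ Ioc (0 : ℝ) 1) (hμs : 0 ≤ μs)
    (hqsc : ∀ x, f x ≤ f x1 →
      f x + (1 / γ) * ⟪f' x, xstar - x⟫ + μs / 2 * ‖xstar - x‖ ^ 2 ≤ f xstar) :
    ∀ x, f x ≤ f x1 →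
      (μs * γ / 2 + μs * γ ^ 2 / 4) * ‖x - xstar‖ ^ 2 ≤ ⟪f' x, x - xstar⟫ := by
  intro x hx
  obtain ⟨hγ0, hγ1⟩ := hγ
  set d : EuclideanSpace ℝ (Fin n) := x - xstar with hd
  set c : ℝ → EuclideanSpace ℝ (Fin n) := fun t => xstar + t • d with hc
  have hcd : ∀ t : ℝ, HasDerivAt c d t := by
    intro t
    have h := ((hasDerivAt_id t).smul_const d).const_add xstar
    rw [one_smul] at h
    exact h
  set g : ℝ → ℝ := fun t => f (c t) with hg
  have hgd : ∀ t : ℝ, HasDerivAt g (⟪f' (c t), d⟫) t := by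
    intro t
    have h := ((hgrad (c t)).hasFDerivAt).comp_hasDerivAt t (hcd t)
    rw [InnerProductSpace.toDual_apply_apply] at h
    exact h
  have hceq : ∀ t : ℝ, c t = t • x + (1 - t) • xstar := by
    intro t
    simp only [hc, hd]
    module
  -- points on segment are in sublevel set
  have hmem : ∀ t ∈ Icc (0:ℝ) 1, f (c t) ≤ f x1 := by
    intro t ht
    rw [hceq]
    exact hstarconv x hx t ht
  -- derivative lower bound on segment
  have hderiv_lb : ∀ t ∈ Icc (0:ℝ) 1, 0 < t → γ * μs * t / 2 * ‖d‖ ^ 2 ≤ ⟪f' (c t), d⟫ := by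
    intro t ht ht0
    have hq := hqsc (c t) (hmem t ht)
    have h1 : xstar - c t = -(t • d) := by simp [hc]
    have h2 : ⟪f' (c t), xstar - c t⟫ = -(t * ⟪f' (c t), d⟫) := by
      rw [h1, inner_neg_right, real_inner_smul_right]
    have h3 : ‖xstar - c t‖ ^ 2 = t ^ 2 * ‖d‖ ^ 2 := by
      rw [h1, norm_neg, norm_smul, Real.norm_eq_abs, abs_of_pos ht0, mul_pow]
    set A : ℝ := ⟪f' (c t), d⟫ with hA
    rw [h2, h3] at hq
    have hge : f xstar ≤ f (c t) := hmin _
    have h4 : μs / 2 * (t ^ 2 * ‖d‖ ^ 2) ≤ 1 / γ * (t * A) := by linarith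
    have h5 : γ * (μs / 2 * (t ^ 2 * ‖d‖ ^ 2)) ≤ γ * (1 / γ * (t * A)) :=
      mul_le_mul_of_nonneg_left h4 hγ0.le
    have h6 : γ * (1 / γ * (t * A)) = t * A := by field_simp
    rw [h6] at h5
    have h7 : γ * μs * t / 2 * ‖d‖ ^ 2 * t ≤ A * t := by nlinarith
    exact le_of_mul_le_mul_right h7 ht0
  -- F t = g t - γ μs /4 t² ‖d‖² is monotone on [0,1]
  set F : ℝ → ℝ := fun t => g t - γ * μs / 4 * t ^ 2 * ‖d‖ ^ 2 with hF
  have hFd : ∀ t : ℝ, HasDerivAt F (⟪f' (c t), d⟫ - γ * μs * t / 2 * ‖d‖ ^ 2) t := by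
    intro t
    have h2 : HasDerivAt (fun t : ℝ => γ * μs / 4 * t ^ 2 * ‖d‖ ^ 2)
        (γ * μs * t / 2 * ‖d‖ ^ 2) t := by
      have := ((hasDerivAt_pow 2 t).const_mul (γ * μs / 4)).mul_const (‖d‖ ^ 2)
      rw [show γ * μs * t / 2 * ‖d‖ ^ 2 = γ * μs / 4 * (((2 : ℕ) : ℝ) * t ^ (2 - 1)) * ‖d‖ ^ 2 by push_cast; ring]
      exact this
    exact (hgd t).sub h2
  have hmono : MonotoneOn F (Icc (0:ℝ) 1) := by
    apply monotoneOn_of_deriv_nonneg (convex_Icc 0 1)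
    · intro t _
      exact (hFd t).differentiableAt.continuousAt.continuousWithinAt
    · intro t _
      exact (hFd t).differentiableAt.differentiableWithinAt
    · intro t ht
      rw [interior_Icc] at ht
      rw [(hFd t).deriv]
      have := hderiv_lb t ⟨ht.1.le, ht.2.le⟩ ht.1
      linarith
  have hF01 : F 0 ≤ F 1 := hmono ⟨le_refl 0, zero_le_one⟩ ⟨zero_le_one, le_refl 1⟩ zero_le_one
  have hg0 : g 0 = f xstar := by simp [hg, hc]
  have hg1 : g 1 = f x := by
    have : c 1 = x := by simp [hc, hd]
    simp [hg, this]
  have hgap : γ * μs / 4 * ‖d‖ ^ 2 ≤ f x - f xstar := by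
    have := hF01
    simp only [hF, hg0, hg1] at this
    nlinarith
  -- final quasar inequality at x
  have hq := hqsc x hx
  have h1 : xstar - x = -d := by simp [hd]
  have h2 : ⟪f' x, xstar - x⟫ = -⟪f' x, d⟫ := by rw [h1, inner_neg_right]
  have h3 : ‖xstar - x‖ ^ 2 = ‖d‖ ^ 2 := by rw [h1, norm_neg]
  set B : ℝ := ⟪f' x, d⟫ with hB
  rw [h2, h3] at hq
  have h4 : f x - f xstar + μs / 2 * ‖d‖ ^ 2 ≤ 1 / γ * B := by linarith
  have h5 : γ * (f x - f xstar + μs / 2 * ‖d‖ ^ 2) ≤ γ * (1 / γ * B) :=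
    mul_le_mul_of_nonneg_left h4 hγ0.le
  have h6 : γ * (1 / γ * B) = B := by field_simp
  rw [h6] at h5
  nlinarith [mul_le_mul_of_nonneg_left hgap hγ0.le, sq_nonneg ‖d‖]
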